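/- For every positive integer n, Q(n,n) = 1/3. -/

import Mathlib

/-- Shifted factorial `(a)_k = a(a+1)···(a+k-1)`. -/
def shifted (a : ℚ) (k : ℕ) : ℚ := ∏ t ∈ Finset.range k, (a + t)

/-- `Q(m,n)` from the paper. -/
def Qfun (m n : ℕ) : ℚ :=
  ((Nat.factorial (2*n) : ℚ)^2 * (Nat.factorial (2*m) : ℚ) * (Nat.factorial (m + 2*n - 1) : ℚ)) /
    (2 * (Nat.factorial n : ℚ)^2 * (Nat.factorial m : ℚ) * (Nat.factorial (2*m + 4*n - 2) : ℚ)) *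
  ∑ i ∈ Finset.range n,
    ((-1 : ℚ)^(n - i - 1) / (2*(n:ℚ) - 2*(i:ℚ) - 1)) *
      (shifted ((m:ℚ) + (n:ℚ) - (i:ℚ)) (2*i) / (Nat.factorial i : ℚ)^2)


lemma shifted_succ_right (a : ℚ) (k : ℕ) : shifted a (k+1) = shifted a k * (a + k) := by
  unfold shifted; rw [Finset.prod_range_succ]

lemma shifted_succ_left (a : ℚ) (k : ℕ) : shifted a (k+1) = a * shifted (a+1) k := by
  unfold shifted
  rw [Finset.prod_range_succ']
  rw [mul_comm]
  congr 1
  · push_cast; ring_nf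
  · apply Finset.prod_congr rfl
    intro t _
    push_cast; ring

lemma shifted_L1 (a : ℚ) (k : ℕ) :
    shifted (a-1) (k+2) = (a-1) * (shifted a k * (a + k)) := by
  have h1 := shifted_succ_left (a-1) (k+1)
  rw [show a-1+1 = a from by ring] at h1
  rw [show k+2 = (k+1)+1 from rfl, h1, shifted_succ_right a k]

lemma shifted_L2 (a : ℚ) (k : ℕ) :
    a * (a+1) * shifted (a+2) k = shifted a k * (a + k) * (a + k + 1) := by
  have h2 := shifted_succ_left (a+1) k
  rw [show a+1+1 = a+2 from by ring] at h2
  have h1 := shifted_succ_left a (k+1)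
  have h3 := shifted_succ_right a (k+1)
  have h4 := shifted_succ_right a k
  rw [h4] at h3
  rw [h3] at h1
  push_cast at h1
  calc a * (a+1) * shifted (a+2) k = a * shifted (a+1) (k+1) := by rw [h2]; ring
    _ = shifted a k * (a + k) * (a + k + 1) := by rw [← h1]; ring

def uterm (n i : ℕ) : ℚ :=
  (-1)^i / (2*(n:ℚ) - 2*(i:ℚ) - 1) *
    (shifted (2*(n:ℚ) - (i:ℚ)) (2*i) / (Nat.factorial i : ℚ)^2)

def Rc (n i : ℕ) : ℚ :=
  ((1 - 2*(n:ℚ) + 2*(i:ℚ)) * (i:ℚ)^2 *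
    (-3 + 9*(i:ℚ) - 6*(i:ℚ)^2 - 30*(n:ℚ) + 62*(n:ℚ)*(i:ℚ) - 28*(n:ℚ)*(i:ℚ)^2
      - 104*(n:ℚ)^2 + 104*(n:ℚ)^2*(i:ℚ) - 112*(n:ℚ)^3)) /
  ((n:ℚ) * (2*(n:ℚ)+1)^2 * (2*(n:ℚ) - (i:ℚ)) * (2*(n:ℚ) + 1 - (i:ℚ)) *
    (2*(n:ℚ) + 1 - 2*(i:ℚ)))


set_option maxHeartbeats 2000000 in
lemma step (n i : ℕ) (hilt : i < n) :
    Rc n (i+1) * uterm n (i+1) - Rc n i * uterm n i + uterm (n+1) i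
      + (3*(36*(n:ℚ)^2 - 1)/(2*(n:ℚ)+1)^2) * uterm n i = 0 := by
  have hyx : (i:ℚ) + 1 ≤ (n:ℚ) := by exact_mod_cast hilt
  have hy : (0:ℚ) ≤ (i:ℚ) := Nat.cast_nonneg i
  have hF : (Nat.factorial i : ℚ) ≠ 0 := Nat.cast_ne_zero.mpr (Nat.factorial_ne_zero i)
  have h1 : (2*(n:ℚ) - 2*(i:ℚ) - 1) ≠ 0 := by nlinarith
  have h2 : (2*(n:ℚ) - 2*(i:ℚ) - 3) ≠ 0 := by
    have e : ((2*(n:ℤ) - 2*(i:ℤ) - 3 : ℤ) : ℚ) = 2*(n:ℚ) - 2*(i:ℚ) - 3 := by push_cast; ring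
    rw [← e]
    exact_mod_cast (by omega : (2*(n:ℤ) - 2*(i:ℤ) - 3) ≠ 0)
  have h3 : (2*(n:ℚ) - 2*(i:ℚ) + 1) ≠ 0 := by nlinarith
  have hx : (n:ℚ) ≠ 0 := by nlinarith
  have h2x1 : (2*(n:ℚ)+1) ≠ 0 := by nlinarith
  have ha : (2*(n:ℚ) - (i:ℚ)) ≠ 0 := by nlinarith
  have ha1 : (2*(n:ℚ) - (i:ℚ) + 1) ≠ 0 := by nlinarith
  have ha1' : (2*(n:ℚ) + 1 - (i:ℚ)) ≠ 0 := by nlinarith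
  have ha' : (2*(n:ℚ) - (i:ℚ) - 1) ≠ 0 := by nlinarith
  have hb : (2*(n:ℚ) + 1 - 2*(i:ℚ)) ≠ 0 := by nlinarith
  have hi1 : ((i:ℚ) + 1) ≠ 0 := by nlinarith
  have hA2 : (2*(n:ℚ) - ((i:ℚ)+1)) ≠ 0 := by intro h; exact ha' (by linarith)
  have hA3 : (2*(n:ℚ) + 1 - ((i:ℚ)+1)) ≠ 0 := by intro h; exact ha (by linarith)
  have hA4 : (2*(n:ℚ) + 1 - 2*((i:ℚ)+1)) ≠ 0 := by intro h; exact h1 (by linarith)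
  have hA5 : (2*(n:ℚ) - 2*((i:ℚ)+1) - 1) ≠ 0 := by intro h; exact h2 (by linarith)
  have hA6 : (2*((n:ℚ)+1) - 2*(i:ℚ) - 1) ≠ 0 := by intro h; exact h3 (by linarith)
  have e1 : shifted (2*(n:ℚ) - (i:ℚ) - 1) (2*i+2)
      = (2*(n:ℚ) - (i:ℚ) - 1) * (shifted (2*(n:ℚ) - (i:ℚ)) (2*i) * (2*(n:ℚ) - (i:ℚ) + (2*i:ℕ))) :=
    shifted_L1 (2*(n:ℚ) - (i:ℚ)) (2*i)
  have e2 : (2*(n:ℚ) - (i:ℚ)) * ((2*(n:ℚ) - (i:ℚ))+1) * shifted ((2*(n:ℚ) - (i:ℚ))+2) (2*i)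
      = shifted (2*(n:ℚ) - (i:ℚ)) (2*i) * ((2*(n:ℚ) - (i:ℚ)) + (2*i:ℕ)) * ((2*(n:ℚ) - (i:ℚ)) + (2*i:ℕ) + 1) :=
    shifted_L2 (2*(n:ℚ) - (i:ℚ)) (2*i)
  push_cast at e1 e2
  have E1 : Rc n (i+1) * uterm n (i+1) =
      ((1 - 2*(n:ℚ) + 2*((i:ℚ)+1)) * ((i:ℚ)+1)^2 *
        (-3 + 9*((i:ℚ)+1) - 6*((i:ℚ)+1)^2 - 30*(n:ℚ) + 62*(n:ℚ)*((i:ℚ)+1) - 28*(n:ℚ)*((i:ℚ)+1)^2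
          - 104*(n:ℚ)^2 + 104*(n:ℚ)^2*((i:ℚ)+1) - 112*(n:ℚ)^3)
        * ((-1)^(i+1) * ((2*(n:ℚ) - (i:ℚ) - 1) * (shifted (2*(n:ℚ) - (i:ℚ)) (2*i) * (2*(n:ℚ) + (i:ℚ)))))
        * ((2*(n:ℚ) - (i:ℚ) + 1) * (2*(n:ℚ) - 2*(i:ℚ) + 1)))
      / ((n:ℚ) * (2*(n:ℚ)+1)^2 * (2*(n:ℚ) - (i:ℚ) - 1) * (2*(n:ℚ) - (i:ℚ)) * (2*(n:ℚ) - (i:ℚ) + 1)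
          * (2*(n:ℚ) - 2*(i:ℚ) - 3) * (2*(n:ℚ) - 2*(i:ℚ) - 1) * (2*(n:ℚ) - 2*(i:ℚ) + 1)
          * ((i:ℚ)+1)^2 * (Nat.factorial i : ℚ)^2) := by
    simp only [uterm, Rc, Nat.factorial_succ]
    push_cast
    rw [show 2*(i+1) = 2*i+2 from rfl]
    rw [show 2*(n:ℚ) - ((i:ℚ)+1) = 2*(n:ℚ) - (i:ℚ) - 1 from by ring]
    rw [e1]
    rw [show 2*(n:ℚ) - (i:ℚ) + 2*(i:ℚ) = 2*(n:ℚ) + (i:ℚ) from by ring]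
    rw [div_mul_div_comm, div_mul_div_comm, div_eq_div_iff (by apply_rules [mul_ne_zero, pow_ne_zero])
      (by apply_rules [mul_ne_zero, pow_ne_zero])]
    ring
  have E2 : Rc n i * uterm n i =
      ((1 - 2*(n:ℚ) + 2*(i:ℚ)) * (i:ℚ)^2 *
        (-3 + 9*(i:ℚ) - 6*(i:ℚ)^2 - 30*(n:ℚ) + 62*(n:ℚ)*(i:ℚ) - 28*(n:ℚ)*(i:ℚ)^2
          - 104*(n:ℚ)^2 + 104*(n:ℚ)^2*(i:ℚ) - 112*(n:ℚ)^3)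
        * ((-1)^i * shifted (2*(n:ℚ) - (i:ℚ)) (2*i))
        * ((2*(n:ℚ) - (i:ℚ) - 1) * (2*(n:ℚ) - 2*(i:ℚ) - 3) * ((i:ℚ)+1)^2))
      / ((n:ℚ) * (2*(n:ℚ)+1)^2 * (2*(n:ℚ) - (i:ℚ) - 1) * (2*(n:ℚ) - (i:ℚ)) * (2*(n:ℚ) - (i:ℚ) + 1)
          * (2*(n:ℚ) - 2*(i:ℚ) - 3) * (2*(n:ℚ) - 2*(i:ℚ) - 1) * (2*(n:ℚ) - 2*(i:ℚ) + 1)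
          * ((i:ℚ)+1)^2 * (Nat.factorial i : ℚ)^2) := by
    simp only [uterm, Rc]
    rw [div_mul_div_comm, div_mul_div_comm, div_eq_div_iff (by apply_rules [mul_ne_zero, pow_ne_zero])
      (by apply_rules [mul_ne_zero, pow_ne_zero])]
    ring
  have E3 : uterm (n+1) i =
      ((-1)^i * (shifted (2*(n:ℚ) - (i:ℚ)) (2*i) * (2*(n:ℚ) + (i:ℚ)) * (2*(n:ℚ) + (i:ℚ) + 1))
        * ((n:ℚ) * (2*(n:ℚ)+1)^2 * (2*(n:ℚ) - (i:ℚ) - 1)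
            * (2*(n:ℚ) - 2*(i:ℚ) - 3) * (2*(n:ℚ) - 2*(i:ℚ) - 1) * ((i:ℚ)+1)^2))
      / ((n:ℚ) * (2*(n:ℚ)+1)^2 * (2*(n:ℚ) - (i:ℚ) - 1) * (2*(n:ℚ) - (i:ℚ)) * (2*(n:ℚ) - (i:ℚ) + 1)
          * (2*(n:ℚ) - 2*(i:ℚ) - 3) * (2*(n:ℚ) - 2*(i:ℚ) - 1) * (2*(n:ℚ) - 2*(i:ℚ) + 1)
          * ((i:ℚ)+1)^2 * (Nat.factorial i : ℚ)^2) := by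
    simp only [uterm]
    push_cast
    rw [show 2*((n:ℚ)+1) - (i:ℚ) = 2*(n:ℚ) - (i:ℚ) + 2 from by ring]
    rw [div_mul_div_comm, div_eq_div_iff (by apply_rules [mul_ne_zero, pow_ne_zero])
      (by apply_rules [mul_ne_zero, pow_ne_zero])]
    linear_combination ((-1:ℚ)^i * (n:ℚ) * (2*(n:ℚ)+1)^2 * (2*(n:ℚ) - (i:ℚ) - 1)
      * (2*(n:ℚ) - 2*(i:ℚ) - 3) * (2*(n:ℚ) - 2*(i:ℚ) - 1) * (2*(n:ℚ) - 2*(i:ℚ) + 1)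
      * ((i:ℚ)+1)^2 * (Nat.factorial i : ℚ)^2) * e2
  have E4 : (3*(36*(n:ℚ)^2 - 1)/(2*(n:ℚ)+1)^2) * uterm n i =
      (3*(36*(n:ℚ)^2 - 1) * ((-1)^i * shifted (2*(n:ℚ) - (i:ℚ)) (2*i))
        * ((n:ℚ) * (2*(n:ℚ) - (i:ℚ) - 1) * (2*(n:ℚ) - (i:ℚ)) * (2*(n:ℚ) - (i:ℚ) + 1)
            * (2*(n:ℚ) - 2*(i:ℚ) - 3) * (2*(n:ℚ) - 2*(i:ℚ) + 1) * ((i:ℚ)+1)^2))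
      / ((n:ℚ) * (2*(n:ℚ)+1)^2 * (2*(n:ℚ) - (i:ℚ) - 1) * (2*(n:ℚ) - (i:ℚ)) * (2*(n:ℚ) - (i:ℚ) + 1)
          * (2*(n:ℚ) - 2*(i:ℚ) - 3) * (2*(n:ℚ) - 2*(i:ℚ) - 1) * (2*(n:ℚ) - 2*(i:ℚ) + 1)
          * ((i:ℚ)+1)^2 * (Nat.factorial i : ℚ)^2) := by
    simp only [uterm]
    rw [div_mul_div_comm, div_mul_div_comm, div_eq_div_iff (by apply_rules [mul_ne_zero, pow_ne_zero])
      (by apply_rules [mul_ne_zero, pow_ne_zero])]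
    ring
  rw [E1, E2, E3, E4, div_sub_div_same, ← add_div, ← add_div, div_eq_zero_iff]
  left
  ring
def Ssum (n : ℕ) : ℚ := ∑ i ∈ Finset.range n, uterm n i

lemma Rc_zero (n : ℕ) : Rc n 0 = 0 := by
  simp [Rc]

set_option maxHeartbeats 1000000 in
lemma boundary (n : ℕ) (hn : 1 ≤ n) : uterm (n+1) n = Rc n n * uterm n n := by
  have hx1 : (1:ℚ) ≤ (n:ℚ) := by exact_mod_cast hn
  have hF : (Nat.factorial n : ℚ) ≠ 0 := Nat.cast_ne_zero.mpr (Nat.factorial_ne_zero n)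
  have hx : (n:ℚ) ≠ 0 := by nlinarith
  have hx2 : (n:ℚ) + 1 ≠ 0 := by nlinarith
  have h2x1 : (2*(n:ℚ)+1) ≠ 0 := by nlinarith
  have e2 : (n:ℚ) * ((n:ℚ)+1) * shifted ((n:ℚ)+2) (2*n)
      = shifted (n:ℚ) (2*n) * ((n:ℚ) + (2*n:ℕ)) * ((n:ℚ) + (2*n:ℕ) + 1) :=
    shifted_L2 (n:ℚ) (2*n)
  push_cast at e2
  have e2' : shifted ((n:ℚ)+2) (2*n)
      = shifted (n:ℚ) (2*n) * ((n:ℚ) + 2*(n:ℚ)) * ((n:ℚ) + 2*(n:ℚ) + 1) / ((n:ℚ) * ((n:ℚ)+1)) := by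
    rw [eq_div_iff (mul_ne_zero hx hx2)]
    linear_combination e2
  simp only [uterm, Rc]
  push_cast
  rw [show 2*((n:ℚ)+1) - (n:ℚ) = (n:ℚ)+2 from by ring,
      show 2*(n:ℚ) - (n:ℚ) = (n:ℚ) from by ring,
      show 2*((n:ℚ)+1) - 2*(n:ℚ) - 1 = 1 from by ring,
      show 2*(n:ℚ) - 2*(n:ℚ) - 1 = -1 from by ring,
      show 2*(n:ℚ) + 1 - 2*(n:ℚ) = 1 from by ring,
      show 2*(n:ℚ) + 1 - (n:ℚ) = (n:ℚ) + 1 from by ring,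
      e2']
  field_simp
  ring

lemma rec_step (n : ℕ) (hn : 1 ≤ n) :
    Ssum (n+1) = -(3*(36*(n:ℚ)^2 - 1)/(2*(n:ℚ)+1)^2) * Ssum n := by
  have key : ∀ i ∈ Finset.range n, uterm (n+1) i
      = (Rc n i * uterm n i - Rc n (i+1) * uterm n (i+1))
        - (3*(36*(n:ℚ)^2 - 1)/(2*(n:ℚ)+1)^2) * uterm n i := by
    intro i hi
    have h := step n i (Finset.mem_range.mp hi)
    linarith
  unfold Ssum
  rw [Finset.sum_range_succ, Finset.sum_congr rfl key, Finset.sum_sub_distrib,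
    Finset.sum_range_sub' (fun i => Rc n i * uterm n i) n, Rc_zero, ← Finset.mul_sum,
    boundary n hn]
  ring

lemma fact_cast_succ (k : ℕ) :
    (Nat.factorial (k+1) : ℚ) = ((k:ℚ)+1) * (Nat.factorial k : ℚ) := by
  rw [Nat.factorial_succ]; push_cast; ring

lemma fact6 (k : ℕ) : (Nat.factorial (k+6) : ℚ)
    = ((k:ℚ)+6)*((k:ℚ)+5)*((k:ℚ)+4)*((k:ℚ)+3)*((k:ℚ)+2)*((k:ℚ)+1) * (Nat.factorial k : ℚ) := by
  rw [show k+6 = (k+5)+1 from rfl, fact_cast_succ, show k+5 = (k+4)+1 from rfl, fact_cast_succ,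
    show k+4 = (k+3)+1 from rfl, fact_cast_succ, show k+3 = (k+2)+1 from rfl, fact_cast_succ,
    show k+2 = (k+1)+1 from rfl, fact_cast_succ, fact_cast_succ]
  push_cast
  ring

lemma fact3 (k : ℕ) : (Nat.factorial (k+3) : ℚ)
    = ((k:ℚ)+3)*((k:ℚ)+2)*((k:ℚ)+1) * (Nat.factorial k : ℚ) := by
  rw [show k+3 = (k+2)+1 from rfl, fact_cast_succ, show k+2 = (k+1)+1 from rfl, fact_cast_succ,
    fact_cast_succ]
  push_cast
  ring

lemma fact2 (k : ℕ) : (Nat.factorial (k+2) : ℚ)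
    = ((k:ℚ)+2)*((k:ℚ)+1) * (Nat.factorial k : ℚ) := by
  rw [show k+2 = (k+1)+1 from rfl, fact_cast_succ, fact_cast_succ]
  push_cast
  ring

set_option maxHeartbeats 2000000 in
lemma Ssum_closed (m : ℕ) :
    Ssum (m+1) = (-1)^m * (2/3) * (Nat.factorial (m+1) : ℚ)^3 * (Nat.factorial (6*m+4) : ℚ)
      / ((Nat.factorial (2*m+2) : ℚ)^3 * (Nat.factorial (3*m+2) : ℚ)) := by
  induction m with
  | zero =>
    show uterm 1 0 + 0 = _
    simp [uterm, shifted]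
    norm_num [Nat.factorial]
  | succ m ih =>
    have h := rec_step (m+1) (Nat.le_add_left 1 m)
    rw [show m+1+1 = (m+1)+1 from rfl, h, ih]
    have hFm : (Nat.factorial (m+1) : ℚ) ≠ 0 := Nat.cast_ne_zero.mpr (Nat.factorial_ne_zero _)
    have hF6 : (Nat.factorial (6*m+4) : ℚ) ≠ 0 := Nat.cast_ne_zero.mpr (Nat.factorial_ne_zero _)
    have hF2 : (Nat.factorial (2*m+2) : ℚ) ≠ 0 := Nat.cast_ne_zero.mpr (Nat.factorial_ne_zero _)
    have hF3 : (Nat.factorial (3*m+2) : ℚ) ≠ 0 := Nat.cast_ne_zero.mpr (Nat.factorial_ne_zero _)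
    have hm1 : ((m:ℚ)+1) ≠ 0 := by positivity
    have hm2 : ((m:ℚ)+2) ≠ 0 := by positivity
    have h2m3 : (2*((m:ℚ)+1)+1) ≠ 0 := by positivity
    rw [show 6*(m+1)+4 = (6*m+4)+6 from by ring,
        show 2*(m+1)+2 = (2*m+2)+2 from by ring,
        show 3*(m+1)+2 = (3*m+2)+3 from by ring,
        fact6 (6*m+4), fact2 (2*m+2), fact3 (3*m+2), fact_cast_succ (m+1)]
    push_cast
    set A1 : ℚ := (Nat.factorial (m+1) : ℚ) with hA1
    set A2 : ℚ := (Nat.factorial (6*m+4) : ℚ) with hA2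
    set A3 : ℚ := (Nat.factorial (2*m+2) : ℚ) with hA3
    set A4 : ℚ := (Nat.factorial (3*m+2) : ℚ) with hA4
    field_simp
    ring

set_option maxHeartbeats 1000000 in
theorem Q_eq_one_third (n : ℕ) (hn : 1 ≤ n) : Qfun n n = 1/3 := by
  obtain ⟨m, rfl⟩ := Nat.exists_eq_add_of_le' hn
  unfold Qfun
  have hneg : (-1:ℚ)^m * (-1)^m = 1 := by
    rw [← pow_add]; exact Even.neg_one_pow ⟨m, rfl⟩
  have hsum : (∑ i ∈ Finset.range (m+1),
      ((-1 : ℚ)^((m+1) - i - 1) / (2*((m+1:ℕ):ℚ) - 2*(i:ℚ) - 1)) *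
        (shifted (((m+1:ℕ):ℚ) + ((m+1:ℕ):ℚ) - (i:ℚ)) (2*i) / (Nat.factorial i : ℚ)^2))
      = (-1)^m * Ssum (m+1) := by
    rw [Ssum, Finset.mul_sum]
    apply Finset.sum_congr rfl
    intro i hi
    have hin : i < m+1 := Finset.mem_range.mp hi
    rw [show ((m+1:ℕ):ℚ) + ((m+1:ℕ):ℚ) - (i:ℚ) = 2*((m+1:ℕ):ℚ) - (i:ℚ) from by ring]
    simp only [uterm]
    rw [show (m+1) - i - 1 = m - i from by omega]
    have hpow : (-1:ℚ)^(m-i) * (-1)^i = (-1)^m := by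
      rw [← pow_add]; congr 1; omega
    have hsq : (-1:ℚ)^i * (-1)^i = 1 := by
      rw [← pow_add]; exact Even.neg_one_pow ⟨i, rfl⟩
    linear_combination
      ((shifted (2*((m+1:ℕ):ℚ) - (i:ℚ)) (2*i) /
          (2*((m+1:ℕ):ℚ) - 2*(i:ℚ) - 1) / (Nat.factorial i : ℚ)^2) * (-1:ℚ)^i) * hpow
      - ((shifted (2*((m+1:ℕ):ℚ) - (i:ℚ)) (2*i) /
          (2*((m+1:ℕ):ℚ) - 2*(i:ℚ) - 1) / (Nat.factorial i : ℚ)^2) * (-1:ℚ)^(m-i)) * hsq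
  have hsum2 : (∑ i ∈ Finset.range (m+1),
      ((-1 : ℚ)^((m+1) - i - 1) / (2*((m+1:ℕ):ℚ) - 2*(i:ℚ) - 1)) *
        (shifted (((m+1:ℕ):ℚ) + ((m+1:ℕ):ℚ) - (i:ℚ)) (2*i) / (Nat.factorial i : ℚ)^2))
      = (2/3) * ((Nat.factorial (m+1) : ℚ)^3 * (Nat.factorial (6*m+4) : ℚ)
          / ((Nat.factorial (2*m+2) : ℚ)^3 * (Nat.factorial (3*m+2) : ℚ))) := by
    rw [hsum, Ssum_closed m]
    linear_combination ((2/3) * ((Nat.factorial (m+1) : ℚ)^3 * (Nat.factorial (6*m+4) : ℚ)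
      / ((Nat.factorial (2*m+2) : ℚ)^3 * (Nat.factorial (3*m+2) : ℚ)))) * hneg
  rw [hsum2,
    show (m+1) + 2*(m+1) - 1 = 3*m+2 from by omega,
    show 2*(m+1) + 4*(m+1) - 2 = 6*m+4 from by omega,
    show 2*(m+1) = 2*m+2 from by ring]
  have hFm : (Nat.factorial (m+1) : ℚ) ≠ 0 := Nat.cast_ne_zero.mpr (Nat.factorial_ne_zero _)
  have hF6 : (Nat.factorial (6*m+4) : ℚ) ≠ 0 := Nat.cast_ne_zero.mpr (Nat.factorial_ne_zero _)
  have hF2 : (Nat.factorial (2*m+2) : ℚ) ≠ 0 := Nat.cast_ne_zero.mpr (Nat.factorial_ne_zero _)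
  have hF3 : (Nat.factorial (3*m+2) : ℚ) ≠ 0 := Nat.cast_ne_zero.mpr (Nat.factorial_ne_zero _)
  field_simp
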